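/- Let N ≥ 2, let A_N be the adjacency matrix of the hypercube graph H_N, and let P = (1/N)·A_N be its transition probability matrix. Then for every i ∈ {0, 1, …, N}, the minimum of the nonzero entries of the matrix power P^i equals i!·N^{−i}; equivalently, the minimum of the nonzero entries of A_N^i equals i!. -/

import Mathlib

open Nat

/-- The hypercube graph `H_N` on vertex set `{0,1}^N`: two binary strings are
adjacent iff their Hamming distance equals 1. -/
def hypercube (N : ℕ) : SimpleGraph (Fin N → Bool) where
  Adj x y := hammingDist x y = 1
  symm := by
    constructor
    intro x y h
    exact (hammingDist_comm y x).trans h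
  loopless := by
    constructor
    intro x h
    simp [hammingDist_self] at h

instance (N : ℕ) : DecidableRel (hypercube N).Adj := fun x y =>
  inferInstanceAs (Decidable (hammingDist x y = 1))

open Finset Function


section helpers

variable {N : ℕ}

/-- key update identity for hamming distance -/
lemma dist_update (x y : Fin N → Bool) (j : Fin N) (b : Bool) :
    hammingDist (Function.update x j b) y + (if x j ≠ y j then 1 else 0)
      = hammingDist x y + (if b ≠ y j then 1 else 0) := by
  classical
  have h1 : hammingDist x y = ∑ k, (if x k ≠ y k then 1 else 0) := by
    simp [hammingDist, Finset.card_filter]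
  have h2 : hammingDist (Function.update x j b) y
      = ∑ k, (if (Function.update x j b) k ≠ y k then 1 else 0) := by
    simp [hammingDist, Finset.card_filter]
  have h3 : (fun k => if (Function.update x j b) k ≠ y k then 1 else 0)
      = Function.update (fun k => if x k ≠ y k then (1:ℕ) else 0) j
          (if b ≠ y j then 1 else 0) := by
    funext k
    by_cases hk : k = j
    · subst hk; simp
    · simp [Function.update_of_ne hk]
  rw [h1, h2, h3, Finset.sum_update_of_mem (Finset.mem_univ j)]
  rw [← Finset.add_sum_erase _ _ (Finset.mem_univ j)]
  rw [Finset.sdiff_singleton_eq_erase]; ring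

lemma dist_update_self (x : Fin N → Bool) (j : Fin N) (b : Bool) :
    hammingDist (Function.update x j b) x = if b ≠ x j then 1 else 0 := by
  have := dist_update x x j b
  simpa [hammingDist_self] using this

/-- a neighbor in the hypercube is a single-coordinate flip -/
lemma adj_structure {x z : Fin N → Bool} (h : hammingDist x z = 1) :
    ∃ j : Fin N, x j ≠ z j ∧ z = Function.update x j (z j) := by
  classical
  rw [hammingDist, Finset.card_eq_one] at h
  obtain ⟨j, hj⟩ := h
  have hmem : ∀ k, (x k ≠ z k) ↔ k = j := by
    intro k
    constructor
    · intro hk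
      have : k ∈ ({j} : Finset (Fin N)) := hj ▸ (Finset.mem_filter.2 ⟨Finset.mem_univ k, hk⟩)
      simpa using this
    · intro hk
      subst hk
      have : k ∈ Finset.filter (fun m => x m ≠ z m) Finset.univ := by
        rw [hj]; simp
      exact (Finset.mem_filter.1 this).2
  refine ⟨j, (hmem j).2 rfl, ?_⟩
  funext k
  by_cases hk : k = j
  · subst hk; simp
  · have : x k = z k := by
      by_contra hc
      exact hk ((hmem k).1 hc)
    simp [Function.update_of_ne hk, this.symm]

lemma nbr_dist {x z : Fin N → Bool} (y : Fin N → Bool) (h : (hypercube N).Adj x z) :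
    hammingDist z y = hammingDist x y + 1 ∨ hammingDist z y + 1 = hammingDist x y := by
  obtain ⟨j, hne, hz⟩ := adj_structure (h : hammingDist x z = 1)
  have key := dist_update x y j (z j)
  rw [← hz] at key
  by_cases h1 : x j = y j
  · left
    have h2 : z j ≠ y j := by
      revert hne h1; cases x j <;> cases y j <;> cases z j <;> simp
    simp [h1, h2] at key
    omega
  · right
    have h2 : z j = y j := by
      revert hne h1; cases x j <;> cases y j <;> cases z j <;> simp
    simp [h1, h2] at key
    omega

lemma adj_update {x : Fin N → Bool} {j : Fin N} {b : Bool} (h : b ≠ x j) :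
    (hypercube N).Adj x (Function.update x j b) := by
  show hammingDist x (Function.update x j b) = 1
  rw [hammingDist_comm, dist_update_self]
  simp [h]

lemma update_inj {x : Fin N → Bool} {b : Fin N → Bool} {j j' : Fin N}
    (hj : b j ≠ x j) (h : Function.update x j (b j) = Function.update x j' (b j')) :
    j = j' := by
  by_contra hne
  have := congrFun h j
  rw [Function.update_self, Function.update_of_ne hne] at this
  exact hj this

end helpers

section walks

variable {N : ℕ}

local notation "A" => SimpleGraph.adjMatrix ℕ (hypercube N)

lemma pow_succ_apply (i : ℕ) (x y : Fin N → Bool) :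
    ((A) ^ (i+1)) x y = ∑ z ∈ (hypercube N).neighborFinset x, ((A) ^ i) z y := by
  have hp : (A) ^ (i+1) = SimpleGraph.adjMatrix ℕ (hypercube N) * (A) ^ i := pow_succ' _ i
  rw [hp]
  exact SimpleGraph.adjMatrix_mul_apply _ _ _ _

/-- nonzero walk count forces distance bound and parity -/
lemma walk_dist : ∀ i : ℕ, ∀ x y : Fin N → Bool, ((A) ^ i) x y ≠ 0 →
    hammingDist x y ≤ i ∧ hammingDist x y % 2 = i % 2 := by
  intro i
  induction i with
  | zero =>
    intro x y h
    simp only [pow_zero] at h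
    have : x = y := by
      by_contra hc
      exact h (Matrix.one_apply_ne hc)
    subst this
    simp [hammingDist_self]
  | succ i ih =>
    intro x y h
    rw [pow_succ_apply] at h
    obtain ⟨z, hz, hnz⟩ : ∃ z ∈ (hypercube N).neighborFinset x, ((A) ^ i) z y ≠ 0 := by
      by_contra hc
      push_neg at hc
      exact h (Finset.sum_eq_zero hc)
    have hadj : (hypercube N).Adj x z := (SimpleGraph.mem_neighborFinset _ _ _).1 hz
    have ⟨h1, h2⟩ := ih z y hnz
    have := nbr_dist y hadj
    omega

/-- existence of walks -/
lemma walk_exists (hN : 1 ≤ N) : ∀ i : ℕ, ∀ x y : Fin N → Bool,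
    hammingDist x y ≤ i → hammingDist x y % 2 = i % 2 → ((A) ^ i) x y ≠ 0 := by
  intro i
  induction i with
  | zero =>
    intro x y h _
    have : x = y := eq_of_hammingDist_eq_zero (Nat.le_zero.1 h)
    subst this
    simp
  | succ i ih =>
    intro x y h hpar
    rw [pow_succ_apply]
    by_cases hd : hammingDist x y = 0
    · -- x = y ; flip any coordinate and come back
      have hx : x = y := eq_of_hammingDist_eq_zero hd
      subst hx
      have hi1 : i % 2 = 1 := by omega
      set j : Fin N := ⟨0, hN⟩
      set z := Function.update x j (!x j) with hzdef
      have hadj : (hypercube N).Adj x z := adj_update (by cases x j <;> simp)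
      have hdz : hammingDist z x = 1 := by
        rw [hzdef, dist_update_self]; cases x j <;> simp
      have hnz : ((A) ^ i) z x ≠ 0 := ih z x (by omega) (by omega)
      intro hc
      rw [Finset.sum_eq_zero_iff] at hc
      exact hnz (hc z ((SimpleGraph.mem_neighborFinset _ _ _).2 hadj))
    · obtain ⟨j, hj⟩ : ∃ j, x j ≠ y j := by
        by_contra hc
        push_neg at hc
        exact hd (by rw [hammingDist_eq_zero]; funext k; exact hc k)
      set z := Function.update x j (y j) with hzdef
      have hadj : (hypercube N).Adj x z := adj_update (fun hc => hj hc.symm)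
      have hdz : hammingDist z y + 1 = hammingDist x y := by
        rw [hzdef]
        have h' := dist_update x y j (y j)
        simp [hj] at h'
        omega
      have hnz : ((A) ^ i) z y ≠ 0 := ih z y (by omega) (by omega)
      intro hc
      rw [Finset.sum_eq_zero_iff] at hc
      exact hnz (hc z ((SimpleGraph.mem_neighborFinset _ _ _).2 hadj))

/-- walk count at exact distance is at most i! -/
lemma walk_upper : ∀ i : ℕ, ∀ x y : Fin N → Bool, hammingDist x y = i →
    ((A) ^ i) x y ≤ i ! := by
  intro i
  induction i with
  | zero =>
    intro x y _
    simp only [pow_zero, Nat.factorial_zero]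
    by_cases h : x = y
    · subst h; simp
    · rw [Matrix.one_apply_ne h]; omega
  | succ i ih =>
    intro x y hd
    rw [pow_succ_apply]
    classical
    set D : Finset (Fin N) := Finset.filter (fun k => x k ≠ y k) Finset.univ with hD
    have hDcard : D.card = i + 1 := hd
    set T : Finset (Fin N → Bool) :=
      ((hypercube N).neighborFinset x).filter (fun z => ((A) ^ i) z y ≠ 0) with hT
    have hsum : ∑ z ∈ (hypercube N).neighborFinset x, ((A) ^ i) z y
        = ∑ z ∈ T, ((A) ^ i) z y := (Finset.sum_filter_ne_zero _).symm
    have hTsub : T ⊆ D.image (fun j => Function.update x j (y j)) := by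
      intro z hz
      rw [hT, Finset.mem_filter, SimpleGraph.mem_neighborFinset] at hz
      obtain ⟨hadj, hnz⟩ := hz
      obtain ⟨j, hne, hzeq⟩ := adj_structure (hadj : hammingDist x z = 1)
      have hdz : hammingDist z y ≤ i := (walk_dist i z y hnz).1
      have hjD : x j ≠ y j := by
        intro hc
        -- then dist z y = dist x y + 1 = i + 2 > i
        have key := dist_update x y j (z j)
        rw [← hzeq] at key
        have h2 : z j ≠ y j := by
          revert hne hc; cases x j <;> cases y j <;> cases z j <;> simp
        simp [hc, h2] at key
        omega
      have hzj : z j = y j := by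
        revert hne hjD; cases x j <;> cases y j <;> cases z j <;> simp
      rw [Finset.mem_image]
      exact ⟨j, Finset.mem_filter.2 ⟨Finset.mem_univ j, hjD⟩, by rw [← hzj, ← hzeq]⟩
    have hTcard : T.card ≤ i + 1 := by
      calc T.card ≤ (D.image (fun j => Function.update x j (y j))).card :=
            Finset.card_le_card hTsub
        _ ≤ D.card := Finset.card_image_le
        _ = i + 1 := hDcard
    have hterm : ∀ z ∈ T, ((A) ^ i) z y ≤ i ! := by
      intro z hz
      rw [hT, Finset.mem_filter, SimpleGraph.mem_neighborFinset] at hz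
      obtain ⟨hadj, hnz⟩ := hz
      have h1 := (walk_dist i z y hnz).1
      have h2 := nbr_dist y hadj
      have : hammingDist z y = i := by omega
      exact ih z y this
    calc ∑ z ∈ (hypercube N).neighborFinset x, ((A) ^ i) z y
        = ∑ z ∈ T, ((A) ^ i) z y := hsum
      _ ≤ ∑ _z ∈ T, i ! := Finset.sum_le_sum hterm
      _ = T.card * i ! := by rw [Finset.sum_const, smul_eq_mul]
      _ ≤ (i + 1) * i ! := Nat.mul_le_mul_right _ hTcard
      _ = (i + 1)! := (Nat.factorial_succ i).symm

/-- lower bound: nonzero walk count is at least i! -/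
lemma walk_lower (hN : 1 ≤ N) : ∀ i : ℕ, i ≤ N → ∀ x y : Fin N → Bool,
    ((A) ^ i) x y ≠ 0 → i ! ≤ ((A) ^ i) x y := by
  intro i
  induction i with
  | zero =>
    intro _ x y h
    simp only [pow_zero] at h ⊢
    exact Nat.one_le_iff_ne_zero.2 h
  | succ i ih =>
    intro hiN x y h
    classical
    have ⟨hdle, hdpar⟩ := walk_dist (i+1) x y h
    rw [pow_succ_apply] at h ⊢
    set S : Finset (Fin N → Bool) :=
      ((hypercube N).neighborFinset x).filter (fun z => ((A) ^ i) z y ≠ 0) with hS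
    -- each element of S contributes at least i!
    have hterm : ∀ z ∈ S, i ! ≤ ((A) ^ i) z y := by
      intro z hz
      rw [hS, Finset.mem_filter] at hz
      exact ih (by omega) z y hz.2
    -- S has at least i+1 elements
    have hScard : i + 1 ≤ S.card := by
      by_cases hcase : hammingDist x y = i + 1
      · -- use the i+1 differing coordinates
        set D : Finset (Fin N) := Finset.filter (fun k => x k ≠ y k) Finset.univ with hD
        have hDcard : D.card = i + 1 := hcase
        have : D.card ≤ S.card := by
          apply Finset.card_le_card_of_injOn (fun j => Function.update x j (y j))
          · intro j hj
            have hjD : x j ≠ y j := (Finset.mem_filter.1 (Finset.mem_coe.1 hj)).2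
            have hadj : (hypercube N).Adj x (Function.update x j (y j)) :=
              adj_update (fun hc => hjD hc.symm)
            have hdz : hammingDist (Function.update x j (y j)) y + 1 = hammingDist x y := by
              have := dist_update x y j (y j)
              simp [hjD] at this
              omega
            rw [hS, Finset.mem_coe, Finset.mem_filter, SimpleGraph.mem_neighborFinset]
            exact ⟨hadj, walk_exists hN i (Function.update x j (y j)) y (by omega) (by omega)⟩
          · intro j hj j' hj' heq
            exact update_inj (Finset.mem_filter.1 (Finset.mem_coe.1 hj)).2.symm heq
        omega
      · -- dist ≤ i - 1 : all N neighbors work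
        have hdle2 : hammingDist x y + 1 ≤ i := by omega
        have : (Finset.univ : Finset (Fin N)).card ≤ S.card := by
          apply Finset.card_le_card_of_injOn (fun j => Function.update x j (!x j))
          · intro j _
            have hadj : (hypercube N).Adj x (Function.update x j (!x j)) :=
              adj_update (by cases x j <;> simp)
            have hdz := nbr_dist y hadj
            rw [hS, Finset.mem_coe, Finset.mem_filter, SimpleGraph.mem_neighborFinset]
            exact ⟨hadj, walk_exists hN i (Function.update x j (!x j)) y (by omega) (by omega)⟩
          · intro j _ j' _ heq
            exact update_inj (b := fun k => !x k) (Bool.not_ne_self (x j)) heq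
        simp only [Finset.card_univ, Fintype.card_fin] at this
        omega
    calc (i+1)! = (i+1) * i ! := Nat.factorial_succ i
      _ ≤ S.card * i ! := Nat.mul_le_mul_right _ hScard
      _ = ∑ _z ∈ S, i ! := by rw [Finset.sum_const, smul_eq_mul]
      _ ≤ ∑ z ∈ S, ((A) ^ i) z y := Finset.sum_le_sum hterm
      _ ≤ ∑ z ∈ (hypercube N).neighborFinset x, ((A) ^ i) z y :=
          Finset.sum_le_sum_of_subset (Finset.filter_subset _ _)

end walks

/-- For `N ≥ 2` and every `i ∈ {0,…,N}`, the minimum of the nonzero entries of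
the `i`-th power of the transition matrix `P = (1/N)·A_N` of the hypercube
equals `i!·N^{−i}`; equivalently, the minimum of the nonzero entries of `A_N^i`
equals `i!`. -/
theorem stmt13 (N : ℕ) (hN : 2 ≤ N) (i : ℕ) (hi : i ≤ N) :
    (∀ x y : Fin N → Bool,
        ((SimpleGraph.adjMatrix ℕ (hypercube N)) ^ i) x y ≠ 0 →
        Nat.factorial i ≤ ((SimpleGraph.adjMatrix ℕ (hypercube N)) ^ i) x y) ∧
    (∃ x y : Fin N → Bool,
        ((SimpleGraph.adjMatrix ℕ (hypercube N)) ^ i) x y = Nat.factorial i) ∧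
    (∀ x y : Fin N → Bool,
        (((N : ℝ)⁻¹ • SimpleGraph.adjMatrix ℝ (hypercube N)) ^ i) x y ≠ 0 →
        (Nat.factorial i : ℝ) * ((N : ℝ) ^ i)⁻¹ ≤
          (((N : ℝ)⁻¹ • SimpleGraph.adjMatrix ℝ (hypercube N)) ^ i) x y) ∧
    (∃ x y : Fin N → Bool,
        (((N : ℝ)⁻¹ • SimpleGraph.adjMatrix ℝ (hypercube N)) ^ i) x y =
          (Nat.factorial i : ℝ) * ((N : ℝ) ^ i)⁻¹) := by
  classical
  have hN1 : 1 ≤ N := by omega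
  -- witnesses at exact distance i
  set x₀ : Fin N → Bool := fun _ => false with hx₀
  set y₀ : Fin N → Bool := fun j => decide ((j : ℕ) < i) with hy₀
  have hxy : hammingDist x₀ y₀ = i := by
    have h1 : hammingDist x₀ y₀
        = (Finset.univ.filter (fun j : Fin N => (j : ℕ) < i)).card := by
      simp only [hammingDist]
      congr 1
      apply Finset.filter_congr
      intro j _
      simp [hx₀, hy₀]
    rw [h1]
    conv_rhs => rw [← Finset.card_range i]
    refine Finset.card_bij (fun (j : Fin N) _ => (j : ℕ)) ?_ ?_ ?_
    · intro a ha
      exact Finset.mem_range.2 (Finset.mem_filter.1 ha).2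
    · intro a _ b _ h
      exact Fin.val_injective h
    · intro m hm
      exact ⟨⟨m, lt_of_lt_of_le (Finset.mem_range.1 hm) hi⟩,
        Finset.mem_filter.2 ⟨Finset.mem_univ _, Finset.mem_range.1 hm⟩, rfl⟩
  have hval : ((SimpleGraph.adjMatrix ℕ (hypercube N)) ^ i) x₀ y₀ = i ! :=
    le_antisymm (walk_upper i _ _ hxy)
      (walk_lower hN1 i hi _ _ (walk_exists hN1 i _ _ (le_of_eq hxy) (by rw [hxy])))
  -- relationship between the real and natural matrices
  have hcast : ∀ x y : Fin N → Bool,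
      (((N : ℝ)⁻¹ • SimpleGraph.adjMatrix ℝ (hypercube N)) ^ i) x y
        = ((N : ℝ) ^ i)⁻¹ * (((SimpleGraph.adjMatrix ℕ (hypercube N)) ^ i) x y : ℝ) := by
    intro x y
    have hmap : (Nat.castRingHom ℝ).mapMatrix (SimpleGraph.adjMatrix ℕ (hypercube N))
        = SimpleGraph.adjMatrix ℝ (hypercube N) := by
      ext v w
      simp [RingHom.mapMatrix_apply, Matrix.map_apply, apply_ite]
    rw [smul_pow, ← hmap, ← map_pow, Matrix.smul_apply, RingHom.mapMatrix_apply,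
      Matrix.map_apply]
    simp [inv_pow]
  have hNpos : (0 : ℝ) < ((N : ℝ) ^ i)⁻¹ := by
    apply inv_pos.2
    apply pow_pos
    exact_mod_cast (by omega : 0 < N)
  refine ⟨walk_lower hN1 i hi, ⟨x₀, y₀, hval⟩, ?_, ⟨x₀, y₀, ?_⟩⟩
  · intro x y hne
    rw [hcast] at hne ⊢
    have hnz : ((SimpleGraph.adjMatrix ℕ (hypercube N)) ^ i) x y ≠ 0 := by
      intro hc
      rw [hc] at hne
      simp at hne
    have hlow := walk_lower hN1 i hi x y hnz
    rw [mul_comm]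
    exact mul_le_mul_of_nonneg_left (by exact_mod_cast hlow) (le_of_lt hNpos)
  · rw [hcast, hval, mul_comm]
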